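/- Suppose the stronger difference conditions hold for μ itself: μ(l,m+1) − μ(l,m) is non-increasing in m and non-decreasing in l, μ(l+1,m) − μ(l,m) is non-increasing in l and non-decreasing in m, and additionally μ(l,m+1) ≥ μ(l,m) (μ non-decreasing in m) and μ(l+1,m) ≤ μ(l,m) (μ non-increasing in l) with μ > 0. Then the function f(l,m) = l·μ(l,m) satisfies Assumption 2: f(l,m+1) − f(l,m) is non-increasing in m and non-decreasing in l, and f(l+1,m) − f(l,m) is non-increasing in l and non-decreasing in m. -/
import Mathlib


/-- The analogous monotone-difference conditions on `μ` itself (together with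
monotonicity of `μ` in each argument) imply Assumption 2 for `f(l,m) = l·μ(l,m)`. -/
theorem stmt5 (μ : ℕ → ℕ → ℝ)
    (hpos : ∀ l m, 0 < μ l m)
    (hdm_m : ∀ l m, μ l (m + 2) - μ l (m + 1) ≤ μ l (m + 1) - μ l m)
    (hdm_l : ∀ l m, μ l (m + 1) - μ l m ≤ μ (l + 1) (m + 1) - μ (l + 1) m)
    (hdl_l : ∀ l m, μ (l + 2) m - μ (l + 1) m ≤ μ (l + 1) m - μ l m)
    (hdl_m : ∀ l m, μ (l + 1) m - μ l m ≤ μ (l + 1) (m + 1) - μ l (m + 1))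
    (hmono_m : ∀ l m, μ l m ≤ μ l (m + 1))
    (hmono_l : ∀ l m, μ (l + 1) m ≤ μ l m) :
    (∀ l m : ℕ, (l : ℝ) * μ l (m + 2) - (l : ℝ) * μ l (m + 1) ≤
        (l : ℝ) * μ l (m + 1) - (l : ℝ) * μ l m) ∧
    (∀ l m : ℕ, (l : ℝ) * μ l (m + 1) - (l : ℝ) * μ l m ≤
        ((l : ℝ) + 1) * μ (l + 1) (m + 1) - ((l : ℝ) + 1) * μ (l + 1) m) ∧
    (∀ l m : ℕ, ((l : ℝ) + 2) * μ (l + 2) m - ((l : ℝ) + 1) * μ (l + 1) m ≤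
        ((l : ℝ) + 1) * μ (l + 1) m - (l : ℝ) * μ l m) ∧
    (∀ l m : ℕ, ((l : ℝ) + 1) * μ (l + 1) m - (l : ℝ) * μ l m ≤
        ((l : ℝ) + 1) * μ (l + 1) (m + 1) - (l : ℝ) * μ l (m + 1)) := by
  refine ⟨fun l m => ?_, fun l m => ?_, fun l m => ?_, fun l m => ?_⟩
  · nlinarith [hdm_m l m, Nat.cast_nonneg (α := ℝ) l]
  · nlinarith [hdm_l l m, hmono_m (l+1) m, Nat.cast_nonneg (α := ℝ) l]
  · nlinarith [hdl_l l m, hmono_l l m, hmono_l (l+1) m, Nat.cast_nonneg (α := ℝ) l]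
  · nlinarith [hdl_m l m, hmono_m (l+1) m, Nat.cast_nonneg (α := ℝ) l]
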